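/- Let G be a finite group of order m and ψ : G × G → {±1} a normalized 2-cocycle. Then M_ψ is Hadamard if and only if for every g ∈ G with g ≠ 1, the row sum Σ_{h∈G} ψ(g,h) equals 0. -/
import Mathlib


open Matrix

/-- A normalized 2-cocycle with values in `ℝ` (thought of as `{±1}`). -/
def IsCocycle {G : Type*} [Group G] (ψ : G × G → ℝ) : Prop :=
  ψ (1, 1) = 1 ∧ (∀ g : G, ψ (g, 1) = 1) ∧ (∀ g : G, ψ (1, g) = 1) ∧
    ∀ g h k : G, ψ (g, h) * ψ (g * h, k) = ψ (g, h * k) * ψ (h, k)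

/-- The cocyclic Hadamard test: for a normalized `{±1}`-valued 2-cocycle `ψ` on a
finite group `G` of order `m`, the matrix `M_ψ` is Hadamard iff every row sum
`∑_h ψ(g,h)` with `g ≠ 1` vanishes. -/
theorem cocyclic_hadamard_test {G : Type*} [Group G] [Fintype G] [DecidableEq G]
    (ψ : G × G → ℝ) (hval : ∀ p, ψ p = 1 ∨ ψ p = -1) (hψ : IsCocycle ψ) :
    (Matrix.of fun g h : G => ψ (g, h)) * (Matrix.of fun g h : G => ψ (g, h))ᵀ
        = (Fintype.card G : ℝ) • 1 ↔
      ∀ g : G, g ≠ 1 → ∑ h : G, ψ (g, h) = 0 := by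
  obtain ⟨h11, hg1, h1g, hcoc⟩ := hψ
  have hsq : ∀ p, ψ p * ψ p = 1 := by
    intro p; rcases hval p with h | h <;> rw [h] <;> ring
  constructor
  · intro hM g hg
    have h := congrFun (congrFun hM g) 1
    simp only [Matrix.mul_apply, Matrix.transpose_apply, Matrix.of_apply,
      Matrix.smul_apply, Matrix.one_apply, smul_eq_mul, if_neg hg, mul_zero] at h
    simpa [h1g] using h
  · intro hrow
    ext g g'
    simp only [Matrix.mul_apply, Matrix.transpose_apply, Matrix.of_apply,
      Matrix.smul_apply, Matrix.one_apply, smul_eq_mul]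
    by_cases h : g = g'
    · subst h
      simp [hsq]
    · rw [if_neg h, mul_zero]
      have key : ∀ k : G, ψ (g, k) * ψ (g', k)
          = ψ (g * g'⁻¹, g') * ψ (g * g'⁻¹, g' * k) := by
        intro k
        have hc := hcoc (g * g'⁻¹) g' k
        rw [inv_mul_cancel_right] at hc
        have h2 := hsq (g * g'⁻¹, g')
        have h3 := hsq (g', k)
        linear_combination ψ (g * g'⁻¹, g') * ψ (g', k) * hc
          - ψ (g, k) * ψ (g', k) * h2 + ψ (g * g'⁻¹, g') * ψ (g * g'⁻¹, g' * k) * h3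
      calc ∑ k : G, ψ (g, k) * ψ (g', k)
          = ∑ k : G, ψ (g * g'⁻¹, g') * ψ (g * g'⁻¹, g' * k) := by
            exact Finset.sum_congr rfl fun k _ => key k
        _ = ψ (g * g'⁻¹, g') * ∑ k : G, ψ (g * g'⁻¹, g' * k) := by
            rw [Finset.mul_sum]
        _ = ψ (g * g'⁻¹, g') * ∑ h : G, ψ (g * g'⁻¹, h) := by
            congr 1
            exact Fintype.sum_bijective (fun k => g' * k)
              (Group.mulLeft_bijective g') _ _ (fun k => rfl)
        _ = 0 := by
            rw [hrow (g * g'⁻¹) fun hh => h (by simpa [mul_inv_eq_one] using hh),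
              mul_zero]
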